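/- Let C be an even binary (n, M, 4) code with n = 2^m - 3, M = 2^{2^m-m-4}, whose distance distribution satisfies A_{n-1} = 1 and A_{n-3} = (n-1)(n-5)/6. Define D = {x ∈ F_2^n : d(x, complement of C) = 1} \ C, and let E be the set of even-weight words not in C ∪ D. Then |D| = (n-1)·M and |E| = 3M. -/

import Mathlib

open Finset

private lemma zmod2_norm_cast {n : ℕ} (x : Fin n → ZMod 2) :
    (hammingNorm x : ZMod 2) = ∑ i, x i := by
  rw [hammingNorm, card_filter]
  push_cast
  refine Finset.sum_congr rfl fun i _ => ?_
  have h : ∀ a : ZMod 2, (if a ≠ 0 then (1 : ZMod 2) else 0) = a := by decide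
  exact h (x i)

private lemma even_norm_iff {n : ℕ} (x : Fin n → ZMod 2) :
    Even (hammingNorm x) ↔ ∑ i, x i = 0 := by
  rw [← zmod2_norm_cast, even_iff_two_dvd, ← ZMod.natCast_eq_zero_iff]

private lemma dist_one_iff {n : ℕ} (x y : Fin n → ZMod 2) :
    hammingDist x y = 1 ↔ ∃ i, x = y + Pi.single i 1 := by
  constructor
  · intro h
    rw [hammingDist] at h
    obtain ⟨i, hi⟩ := Finset.card_eq_one.mp h
    refine ⟨i, funext fun j => ?_⟩
    by_cases hj : j = i
    · subst hj
      have hmem : j ∈ Finset.filter (fun i => x i ≠ y i) Finset.univ :=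
        hi ▸ Finset.mem_singleton_self j
      have hne : x j ≠ y j := by simpa using hmem
      have : x j = y j + 1 := by
        revert hne; generalize x j = a; generalize y j = b; revert a b; decide
      simpa [Pi.single_eq_same] using this
    · have hmem : j ∉ Finset.filter (fun i => x i ≠ y i) Finset.univ := by
        rw [hi]; simpa using hj
      have : x j = y j := by simpa using hmem
      simp [Pi.single_eq_of_ne hj, this]
  · rintro ⟨i, rfl⟩
    rw [hammingDist]
    have : Finset.filter (fun j => (y + Pi.single i 1 : Fin n → ZMod 2) j ≠ y j) Finset.univ = {i} := by
      ext j
      by_cases hj : j = i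
      · subst hj
        simp only [Finset.mem_filter, Finset.mem_univ, true_and, Finset.mem_singleton,
          Pi.add_apply, Pi.single_eq_same]
        have : ∀ a : ZMod 2, a + 1 ≠ a := by decide
        simpa using this (y j)
      · simp [hj, Pi.single_eq_of_ne hj]
    rw [this, Finset.card_singleton]

private lemma sphere_card {n : ℕ} (y : Fin n → ZMod 2) :
    (univ.filter fun x => hammingDist x y = 1).card = n := by
  have hinj : Function.Injective (fun i : Fin n => y + Pi.single i 1) := by
    intro i j h
    have h2 : (Pi.single i 1 : Fin n → ZMod 2) = Pi.single j 1 := add_left_cancel h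
    by_contra hij
    have := congrFun h2 i
    rw [Pi.single_eq_same, Pi.single_eq_of_ne hij] at this
    exact one_ne_zero this
  have himg : (univ.filter fun x => hammingDist x y = 1)
      = univ.image (fun i : Fin n => y + Pi.single i 1) := by
    ext x
    simp only [mem_filter, mem_univ, true_and, mem_image, dist_one_iff]
    constructor
    · rintro ⟨i, rfl⟩; exact ⟨i, rfl⟩
    · rintro ⟨i, rfl⟩; exact ⟨i, rfl⟩
  rw [himg, Finset.card_image_of_injective _ hinj, card_univ, Fintype.card_fin]

private lemma dist_compl {n : ℕ} (x y : Fin n → ZMod 2) :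
    hammingDist x (y + 1) + hammingDist x y = n := by
  rw [hammingDist, hammingDist]
  have h1 : Finset.filter (fun i => x i ≠ (y + 1) i) Finset.univ
      = Finset.filter (fun i => ¬ (x i ≠ y i)) Finset.univ := by
    apply Finset.filter_congr
    intro i _
    simp only [Pi.add_apply, Pi.one_apply]
    generalize x i = a; generalize y i = b; revert a b; decide
  rw [h1, add_comm, Finset.card_filter_add_card_filter_not, card_univ, Fintype.card_fin]

private lemma dist_shift {n : ℕ} (c c' : Fin n → ZMod 2) :
    hammingDist (c + 1) (c' + 1) = hammingDist c c' := by
  rw [hammingDist, hammingDist]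
  congr 1
  apply Finset.filter_congr
  intro i _
  simp

private lemma aux_pow (m : ℕ) (h : 4 ≤ m) : m + 4 ≤ 2 ^ m := by
  induction m with
  | zero => omega
  | succ k ih =>
    by_cases hk : 4 ≤ k
    · have := ih hk; rw [pow_succ]; omega
    · have : k = 3 := by omega
      subst this; norm_num

theorem stmt15 (m : ℕ) (hm : 4 ≤ m) (n M : ℕ)
    (hn : n = 2 ^ m - 3) (hM : M = 2 ^ (2 ^ m - m - 4))
    (C : Finset (Fin n → ZMod 2)) (hcard : C.card = M)
    (heven : ∀ c ∈ C, Even (hammingNorm c))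
    (hdist : ∀ c ∈ C, ∀ c' ∈ C, c ≠ c' → 4 ≤ hammingDist c c')
    -- distance distribution: A_{n-1} = 1
    (hA1 : ((C ×ˢ C).filter fun p => hammingDist p.1 p.2 = n - 1).card = M)
    -- distance distribution: A_{n-3} = (n-1)(n-5)/6
    (hA3 : 6 * ((C ×ˢ C).filter fun p => hammingDist p.1 p.2 = n - 3).card
      = M * (n - 1) * (n - 5)) :
    -- D = {x : d(x, complement of C) = 1} \ C has size (n-1)·M
    ((Finset.univ.filter fun x : Fin n → ZMod 2 =>
        (∃ c ∈ C, hammingDist x (c + 1) = 1) ∧ x ∉ C).card = (n - 1) * M) ∧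
    -- E = even-weight words not in C ∪ D has size 3·M
    ((Finset.univ.filter fun x : Fin n → ZMod 2 =>
        Even (hammingNorm x) ∧ x ∉ C ∧
          ¬ ((∃ c ∈ C, hammingDist x (c + 1) = 1) ∧ x ∉ C)).card = 3 * M) := by
  have hm16 : 16 ≤ 2 ^ m := by
    calc (16 : ℕ) = 2 ^ 4 := by norm_num
    _ ≤ 2 ^ m := Nat.pow_le_pow_right (by norm_num) hm
  have hn13 : 13 ≤ n := by omega
  have hnodd : n % 2 = 1 := by
    have : 2 ^ m % 2 = 0 := by
      have : (2 : ℕ) ∣ 2 ^ m := dvd_pow_self 2 (by omega)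
      omega
    omega
  -- the "sphere union" set S
  set S : Finset (Fin n → ZMod 2) :=
    Finset.univ.filter (fun x => ∃ c ∈ C, hammingDist x (c + 1) = 1) with hSdef
  -- uniqueness of the near codeword
  have huniq : ∀ c ∈ C, ∀ c' ∈ C, ∀ x : Fin n → ZMod 2,
      hammingDist x (c + 1) = 1 → hammingDist x (c' + 1) = 1 → c = c' := by
    intro c hc c' hc' x h1 h2
    by_contra hne
    have h4 := hdist c hc c' hc' hne
    have htri := hammingDist_triangle (c + 1) x (c' + 1)
    rw [hammingDist_comm (c + 1) x] at htri
    rw [dist_shift] at htri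
    omega
  -- |S| = n * M
  have hSbi : S = C.biUnion (fun c => Finset.univ.filter fun x => hammingDist x (c + 1) = 1) := by
    ext x
    simp [hSdef, Finset.mem_biUnion]
  have hScard : S.card = n * M := by
    rw [hSbi, Finset.card_biUnion]
    · rw [Finset.sum_congr rfl (fun c _ => sphere_card (c + 1)), Finset.sum_const, hcard]
      ring
    · intro c hc c' hc' hne
      rw [Function.onFun, Finset.disjoint_left]
      intro x hx hx'
      simp only [Finset.mem_filter] at hx hx'
      exact hne (huniq c hc c' hc' x hx.2 hx'.2)
  -- C ⊆ S using hA1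
  have hCS : C ⊆ S := by
    have hinj : Set.InjOn Prod.fst
        (↑((C ×ˢ C).filter fun p => hammingDist p.1 p.2 = n - 1) :
          Set ((Fin n → ZMod 2) × (Fin n → ZMod 2))) := by
      rintro ⟨x, c⟩ hp ⟨x', c'⟩ hq (h : x = x')
      subst h
      simp only [Finset.coe_filter, Set.mem_setOf_eq, Finset.mem_product] at hp hq
      obtain ⟨⟨hxC, hcC⟩, hd⟩ := hp
      obtain ⟨⟨-, hcC'⟩, hd'⟩ := hq
      have e1 := dist_compl x c
      have e2 := dist_compl x c'
      have d1 : hammingDist x (c + 1) = 1 := by omega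
      have d2 : hammingDist x (c' + 1) = 1 := by omega
      exact Prod.ext rfl (huniq c hcC c' hcC' x d1 d2)
    have himgcard : (((C ×ˢ C).filter fun p => hammingDist p.1 p.2 = n - 1).image
        Prod.fst).card = M := by
      rw [Finset.card_image_of_injOn hinj, hA1]
    have hsub : (((C ×ˢ C).filter fun p => hammingDist p.1 p.2 = n - 1).image
        Prod.fst) ⊆ C := by
      intro x hx
      simp only [Finset.mem_image, Finset.mem_filter, Finset.mem_product] at hx
      obtain ⟨p, ⟨⟨h1, -⟩, -⟩, rfl⟩ := hx
      exact h1
    have heq : (((C ×ˢ C).filter fun p => hammingDist p.1 p.2 = n - 1).image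
        Prod.fst) = C :=
      Finset.eq_of_subset_of_card_le hsub (by rw [himgcard, hcard])
    intro x hx
    rw [← heq] at hx
    simp only [Finset.mem_image, Finset.mem_filter, Finset.mem_product] at hx
    obtain ⟨p, ⟨⟨-, h2⟩, hd⟩, rfl⟩ := hx
    have e1 := dist_compl p.1 p.2
    have d1 : hammingDist p.1 (p.2 + 1) = 1 := by omega
    simp only [hSdef, Finset.mem_filter, Finset.mem_univ, true_and]
    exact ⟨p.2, h2, d1⟩
  -- part 1
  have hD : (Finset.univ.filter fun x : Fin n → ZMod 2 =>
      (∃ c ∈ C, hammingDist x (c + 1) = 1) ∧ x ∉ C) = S \ C := by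
    ext x
    simp [hSdef, and_comm]
  have hDcard : (Finset.univ.filter fun x : Fin n → ZMod 2 =>
      (∃ c ∈ C, hammingDist x (c + 1) = 1) ∧ x ∉ C).card = (n - 1) * M := by
    rw [hD, Finset.card_sdiff_of_subset hCS, hScard, hcard, Nat.sub_mul, one_mul]
  refine ⟨hDcard, ?_⟩
  -- part 2: even words
  -- S consists of even-weight words
  have hSeven : ∀ x ∈ S, Even (hammingNorm x) := by
    intro x hx
    simp only [hSdef, Finset.mem_filter, Finset.mem_univ, true_and] at hx
    obtain ⟨c, hc, hd⟩ := hx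
    obtain ⟨i, rfl⟩ := (dist_one_iff _ _).mp hd
    rw [even_norm_iff]
    have hcsum : ∑ j, c j = 0 := (even_norm_iff c).mp (heven c hc)
    have h1 : ∑ j, (1 : Fin n → ZMod 2) j = 1 := by
      simp only [Pi.one_apply, Finset.sum_const, Finset.card_univ, Fintype.card_fin, nsmul_eq_mul,
        mul_one]
      obtain ⟨k, hk⟩ : ∃ k, n = 2 * k + 1 := ⟨n / 2, by omega⟩
      rw [hk]
      push_cast
      have : (2 : ZMod 2) = 0 := by decide
      rw [this]; ring
    have hs : ∑ j, (Pi.single i 1 : Fin n → ZMod 2) j = 1 := by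
      rw [Finset.sum_pi_single']
      simp
    simp only [Pi.add_apply, Finset.sum_add_distrib, hcsum, h1, hs]
    decide
  -- even set has cardinality 2^(n-1)
  have hi0 : (0 : ℕ) < n := by omega
  set i0 : Fin n := ⟨0, hi0⟩
  have hEv : (Finset.univ.filter fun x : Fin n → ZMod 2 => Even (hammingNorm x)).card
      = 2 ^ (n - 1) := by
    have hAB : (Finset.univ.filter fun x : Fin n → ZMod 2 => Even (hammingNorm x)).card
        = (Finset.univ.filter fun x : Fin n → ZMod 2 => ¬ Even (hammingNorm x)).card := by
      refine Finset.card_bij' (fun x _ => x + Pi.single i0 1) (fun x _ => x + Pi.single i0 1)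
        ?_ ?_ ?_ ?_
      · intro x hx
        simp only [Finset.mem_filter, Finset.mem_univ, true_and, even_norm_iff] at hx ⊢
        have hs : ∑ j, (Pi.single i0 1 : Fin n → ZMod 2) j = 1 := by
          rw [Finset.sum_pi_single']; simp
        simp only [Pi.add_apply, Finset.sum_add_distrib, hx, hs]
        decide
      · intro x hx
        simp only [Finset.mem_filter, Finset.mem_univ, true_and, even_norm_iff] at hx ⊢
        have hs : ∑ j, (Pi.single i0 1 : Fin n → ZMod 2) j = 1 := by
          rw [Finset.sum_pi_single']; simp
        have hx1 : ∑ j, x j = 1 := by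
          revert hx; generalize (∑ j, x j) = a; revert a; decide
        simp only [Pi.add_apply, Finset.sum_add_distrib, hx1, hs]
        decide
      · intro x _
        funext j
        simp only [Pi.add_apply]
        generalize x j = a; generalize (Pi.single i0 1 : Fin n → ZMod 2) j = b
        revert a b; decide
      · intro x _
        funext j
        simp only [Pi.add_apply]
        generalize x j = a; generalize (Pi.single i0 1 : Fin n → ZMod 2) j = b
        revert a b; decide
    have htot := Finset.card_filter_add_card_filter_not
      (s := (Finset.univ : Finset (Fin n → ZMod 2)))
      (p := fun x => Even (hammingNorm x))
    have hcardU : (Finset.univ : Finset (Fin n → ZMod 2)).card = 2 ^ n := by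
      rw [Finset.card_univ]
      simp [ZMod.card]
    have hpow : 2 ^ n = 2 * 2 ^ (n - 1) := by
      rw [← pow_succ']
      congr 1
      omega
    omega
  -- 2^(n-1) = (n+3) * M
  have hpowM : 2 ^ (n - 1) = (n + 3) * M := by
    have h1 : n - 1 = m + (2 ^ m - m - 4) := by
      have := aux_pow m hm
      omega
    have h2 : n + 3 = 2 ^ m := by omega
    rw [h1, pow_add, hM, h2]
  -- E = Ev \ S
  have hE : (Finset.univ.filter fun x : Fin n → ZMod 2 =>
      Even (hammingNorm x) ∧ x ∉ C ∧
        ¬ ((∃ c ∈ C, hammingDist x (c + 1) = 1) ∧ x ∉ C))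
      = (Finset.univ.filter fun x : Fin n → ZMod 2 => Even (hammingNorm x)) \ S := by
    ext x
    simp only [Finset.mem_filter, Finset.mem_univ, true_and, Finset.mem_sdiff, hSdef]
    constructor
    · rintro ⟨he, hnC, hnc⟩
      refine ⟨he, fun hxS => ?_⟩
      exact hnc ⟨hxS, hnC⟩
    · rintro ⟨he, hnS⟩
      have hnC : x ∉ C := fun hxC => hnS (by
        have := hCS hxC
        simpa [hSdef] using this)
      exact ⟨he, hnC, fun h => hnS h.1⟩
  rw [hE, Finset.card_sdiff_of_subset, hEv, hScard, hpowM]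
  · have : (n + 3) * M = n * M + 3 * M := by ring
    omega
  · intro x hx
    simp only [Finset.mem_filter, Finset.mem_univ, true_and]
    exact hSeven x hx
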